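/- Fix e ≥ 1 and q = p^e, and let v ∈ R^α. Suppose v = Σ_a (u_a)^{[q]}·x^a, a finite sum over exponent vectors a = (a₁,…,aₙ) with 0 ≤ a_i < q for all i, where each u_a ∈ R^α and x^a denotes the corresponding monomial (such an expression exists and is unique, since the monomials x^a with all exponents < q form a free basis of R over its subring of q-th powers). Then the R-submodule of R^α generated by {u_a} is the smallest submodule W ⊆ R^α such that v ∈ W^{[q]}. -/

import Mathlib

/-- The bracket power `L^{[q]}` of a submodule `L ⊆ T^α`: the submodule generated by the
entrywise `q`-th powers `v^{[q]}` of the vectors `v ∈ L`. -/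
def bracketPower {T : Type*} [CommRing T] {α : ℕ}
    (q : ℕ) (L : Submodule T (Fin α → T)) : Submodule T (Fin α → T) :=
  Submodule.span T ((fun v : Fin α → T => fun i => (v i) ^ q) '' (L : Set (Fin α → T)))

open MvPolynomial

set_option linter.unusedSectionVars false

namespace BPHelper

variable {σ : Type*} {R : Type*} [CommSemiring R]

lemma shift_inj (q : ℕ) (hq : 0 < q) (a : σ →₀ ℕ) :
    Function.Injective (fun g : σ →₀ ℕ => q • g + a) := by
  intro g g' h
  ext i
  have := congrArg (fun f : σ →₀ ℕ => f i) h
  simp only [Finsupp.add_apply, Finsupp.smul_apply, smul_eq_mul] at this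
  exact Nat.eq_of_mul_eq_mul_left hq (by omega)

noncomputable def phi (q : ℕ) (hq : 0 < q) (a : σ →₀ ℕ) (f : MvPolynomial σ R) :
    MvPolynomial σ R :=
  AddMonoidAlgebra.ofCoeff
    (Finsupp.comapDomain (fun g : σ →₀ ℕ => q • g + a) (AddMonoidAlgebra.coeff f)
      ((shift_inj q hq a).injOn))

lemma coeff_phi (q : ℕ) (hq : 0 < q) (a : σ →₀ ℕ) (f : MvPolynomial σ R) (b : σ →₀ ℕ) :
    coeff b (phi q hq a f) = coeff (q • b + a) f := rfl

lemma phi_add (q : ℕ) (hq : 0 < q) (a : σ →₀ ℕ) (f g : MvPolynomial σ R) :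
    phi q hq a (f + g) = phi q hq a f + phi q hq a g := by
  apply MvPolynomial.ext; intro b
  simp [coeff_phi, coeff_add]

lemma phi_zero (q : ℕ) (hq : 0 < q) (a : σ →₀ ℕ) :
    phi q hq a (0 : MvPolynomial σ R) = 0 := by
  apply MvPolynomial.ext; intro b
  simp [coeff_phi]

lemma phi_sum (q : ℕ) (hq : 0 < q) (a : σ →₀ ℕ) {ι : Type*} (s : Finset ι)
    (F : ι → MvPolynomial σ R) :
    phi q hq a (∑ i ∈ s, F i) = ∑ i ∈ s, phi q hq a (F i) := by
  classical
  induction s using Finset.induction_on with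
  | empty => simp [phi_zero]
  | insert _ _ hni ih =>
    rw [Finset.sum_insert hni, Finset.sum_insert hni, phi_add, ih]

lemma phi_monomial_eq (q : ℕ) (hq : 0 < q) (a b : σ →₀ ℕ) (c : R) :
    phi q hq a (monomial (q • b + a) c) = monomial b c := by
  classical
  apply MvPolynomial.ext; intro b'
  rw [coeff_phi, coeff_monomial, coeff_monomial]
  by_cases hbb : b = b'
  · subst hbb; simp
  · rw [if_neg (fun hh => hbb (shift_inj q hq a hh)), if_neg hbb]

lemma phi_monomial_of_ne (q : ℕ) (hq : 0 < q) (a m : σ →₀ ℕ) (c : R)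
    (h : ∀ b : σ →₀ ℕ, q • b + a ≠ m) :
    phi q hq a (monomial m c) = 0 := by
  classical
  apply MvPolynomial.ext; intro b'
  rw [coeff_phi, coeff_monomial]
  rw [if_neg (by intro hh; exact h b' hh.symm), coeff_zero]

lemma phi_monomial_mul (q : ℕ) (hq : 0 < q) (a : σ →₀ ℕ) (ha : ∀ i, a i < q)
    (m : σ →₀ ℕ) (c : R) (f : MvPolynomial σ R) :
    phi q hq a (monomial (q • m) c * f) = monomial m c * phi q hq a f := by
  apply MvPolynomial.ext; intro b
  rw [coeff_phi, coeff_monomial_mul', coeff_monomial_mul']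
  have hle : q • m ≤ q • b + a ↔ m ≤ b := by
    simp only [Finsupp.le_def, Finsupp.add_apply, Finsupp.smul_apply, smul_eq_mul]
    constructor
    · intro h i
      have := h i; have := ha i
      by_contra hc
      push_neg at hc
      have : b i + 1 ≤ m i := hc
      nlinarith [h i, ha i]
    · intro h i
      have := h i; nlinarith
  by_cases h : m ≤ b
  · rw [if_pos (hle.mpr h), if_pos h, coeff_phi]
    congr 2
    ext i
    have := h i
    simp only [Finsupp.tsub_apply, Finsupp.add_apply, Finsupp.smul_apply, smul_eq_mul]
    have := ha i
    simp only [Finsupp.le_def, Finsupp.smul_apply, smul_eq_mul, Finsupp.add_apply] at h ⊢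
    rw [Nat.mul_sub, Nat.sub_add_comm (Nat.mul_le_mul_left q (h i))]
  · rw [if_neg (fun hh => h (hle.mp hh)), if_neg h]


section CharP

variable {p : ℕ} [Fact p.Prime] {n : ℕ}

lemma zmod_pow_q (e : ℕ) (c : ZMod p) : c ^ (p ^ e) = c := ZMod.pow_card_pow c

lemma phi_pow_mul (e : ℕ) (hq : 0 < p ^ e) (a : Fin n →₀ ℕ) (ha : ∀ i, a i < p ^ e)
    (g h : MvPolynomial (Fin n) (ZMod p)) :
    phi (p ^ e) hq a (g ^ (p ^ e) * h) = g * phi (p ^ e) hq a h := by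
  induction g using MvPolynomial.induction_on' with
  | monomial m c =>
    rw [monomial_pow, zmod_pow_q, phi_monomial_mul (p ^ e) hq a ha]
  | add g1 g2 ih1 ih2 =>
    rw [add_pow_char_pow, add_mul, phi_add, ih1, ih2, add_mul]

/-- exponent-vector to Finsupp -/
noncomputable def aF (e : ℕ) (a : Fin n → Fin (p ^ e)) : Fin n →₀ ℕ :=
  Finsupp.equivFunOnFinite.symm (fun i => (a i : ℕ))

lemma aF_apply (e : ℕ) (a : Fin n → Fin (p ^ e)) (i : Fin n) : aF e a i = (a i : ℕ) := rfl

lemma aF_lt (e : ℕ) (a : Fin n → Fin (p ^ e)) (i : Fin n) : aF e a i < p ^ e := (a i).is_lt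

lemma phi_monomial_aF (e : ℕ) (hq : 0 < p ^ e) (a b : Fin n → Fin (p ^ e)) (c : ZMod p) :
    phi (p ^ e) hq (aF e a) (monomial (aF e b) c)
      = if b = a then monomial 0 c else 0 := by
  split_ifs with h
  · cases h
    have hd : aF e a = (p ^ e) • (0 : Fin n →₀ ℕ) + aF e a := by simp
    nth_rewrite 2 [hd]
    exact phi_monomial_eq (p ^ e) hq (aF e a) 0 c
  · apply phi_monomial_of_ne
    intro g hg
    apply h
    funext i
    have hgi := congrArg (fun f : Fin n →₀ ℕ => f i) hg
    simp only [Finsupp.add_apply, Finsupp.smul_apply, smul_eq_mul, aF_apply] at hgi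
    have hai := (a i).is_lt
    have hbi := (b i).is_lt
    have hg0 : g i = 0 := by nlinarith [Nat.zero_le (g i)]
    rw [hg0, mul_zero, zero_add] at hgi
    exact Fin.ext hgi.symm

lemma phi_one (e : ℕ) (hq : 0 < p ^ e) (a : Fin n → Fin (p ^ e)) :
    phi (p ^ e) hq (aF e a) (1 : MvPolynomial (Fin n) (ZMod p))
      = if a = (fun _ => (⟨0, hq⟩ : Fin (p ^ e))) then 1 else 0 := by
  have h0 : aF e (fun _ : Fin n => (⟨0, hq⟩ : Fin (p ^ e))) = 0 := by ext i; rfl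
  have key := phi_monomial_aF e hq a (fun _ => (⟨0, hq⟩ : Fin (p ^ e))) (1 : ZMod p)
  rw [h0] at key
  rw [show (monomial (0 : Fin n →₀ ℕ)) (1 : ZMod p) = 1 by simp] at key
  rw [key]
  by_cases h : a = fun _ : Fin n => (⟨0, hq⟩ : Fin (p ^ e))
  · rw [if_pos h.symm, if_pos h]
  · rw [if_neg (fun hh => h hh.symm), if_neg h]

lemma reconstruction (e : ℕ) (hq : 0 < p ^ e) (f : MvPolynomial (Fin n) (ZMod p)) :
    ∑ a : Fin n → Fin (p ^ e),
      (phi (p ^ e) hq (aF e a) f) ^ (p ^ e) * monomial (aF e a) 1 = f := by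
  induction f using MvPolynomial.induction_on' with
  | monomial m c =>
    set a0 : Fin n → Fin (p ^ e) := fun i => ⟨m i % p ^ e, Nat.mod_lt _ hq⟩ with ha0
    set m0 : Fin n →₀ ℕ := Finsupp.equivFunOnFinite.symm (fun i => m i / p ^ e) with hm0
    have hdecomp : (p ^ e) • m0 + aF e a0 = m := by
      ext i
      simp only [Finsupp.add_apply, Finsupp.smul_apply, smul_eq_mul, aF_apply, ha0, hm0,
        Finsupp.coe_equivFunOnFinite_symm]
      exact Nat.div_add_mod (m i) (p ^ e)
    rw [Finset.sum_eq_single a0]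
    · rw [← hdecomp, phi_monomial_eq, monomial_pow, zmod_pow_q, monomial_mul, mul_one]
    · intro a _ hne
      rw [phi_monomial_of_ne (p ^ e) hq (aF e a) m c, zero_pow hq.ne', zero_mul]
      intro g hg
      apply hne
      funext i
      have hgi := congrArg (fun f : Fin n →₀ ℕ => f i) hg
      simp only [Finsupp.add_apply, Finsupp.smul_apply, smul_eq_mul, aF_apply] at hgi
      have hai := (a i).is_lt
      apply Fin.ext
      show (a i : ℕ) = m i % p ^ e
      rw [← hgi, Nat.mul_add_mod, Nat.mod_eq_of_lt hai]
    · intro h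
      exact absurd (Finset.mem_univ a0) h
  | add f1 f2 ih1 ih2 =>
    have hsplit : ∀ a : Fin n → Fin (p ^ e), a ∈ Finset.univ → phi (p ^ e) hq (aF e a) (f1 + f2) ^ (p ^ e)
        * monomial (aF e a) 1
        = phi (p ^ e) hq (aF e a) f1 ^ (p ^ e) * monomial (aF e a) 1
          + phi (p ^ e) hq (aF e a) f2 ^ (p ^ e) * monomial (aF e a) 1 := by
      intro a _
      rw [phi_add, add_pow_char_pow, add_mul]
    rw [Finset.sum_congr rfl hsplit, Finset.sum_add_distrib, ih1, ih2]

lemma prodXpow (e : ℕ) (a : Fin n → Fin (p ^ e)) :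
    (∏ i, (X i : MvPolynomial (Fin n) (ZMod p)) ^ ((a i : ℕ))) = monomial (aF e a) 1 := by
  calc (∏ i, (X i : MvPolynomial (Fin n) (ZMod p)) ^ ((a i : ℕ)))
      = ∏ i, (X i : MvPolynomial (Fin n) (ZMod p)) ^ (aF e a i) := rfl
    _ = ∏ i ∈ (aF e a).support, (X i : MvPolynomial (Fin n) (ZMod p)) ^ (aF e a i) :=
        (Finset.prod_subset (Finset.subset_univ _) (fun x _ hx => by
          rw [Finsupp.notMem_support_iff.mp hx, pow_zero])).symm
    _ = monomial (aF e a) 1 := prod_X_pow_eq_monomial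

end CharP

end BPHelper

/-- Let `R = F_p[x₁,…,xₙ]`, `e ≥ 1`, `q = p^e`, and `v ∈ R^α`.  Suppose
`v = Σ_a (u_a)^{[q]} · x^a`, the sum ranging over exponent vectors `a = (a₁,…,aₙ)` with
`0 ≤ aᵢ < q`, where `u_a ∈ R^α` and `x^a = Πᵢ xᵢ^{aᵢ}`.  Then the submodule generated by
the `u_a` is the smallest submodule `W ⊆ R^α` with `v ∈ W^{[q]}`. -/
theorem Ie_of_single_vector
    {p : ℕ} [Fact p.Prime] {n α : ℕ} (e : ℕ) (he : 1 ≤ e)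
    (v : Fin α → MvPolynomial (Fin n) (ZMod p))
    (u : (Fin n → Fin (p ^ e)) → (Fin α → MvPolynomial (Fin n) (ZMod p)))
    (hv : v = ∑ a : Fin n → Fin (p ^ e),
      fun j => (u a j) ^ (p ^ e) * ∏ i, (X i : MvPolynomial (Fin n) (ZMod p)) ^ (a i : ℕ)) :
    IsLeast {W : Submodule (MvPolynomial (Fin n) (ZMod p)) (Fin α → MvPolynomial (Fin n) (ZMod p)) |
        v ∈ bracketPower (p ^ e) W}
      (Submodule.span (MvPolynomial (Fin n) (ZMod p)) (Set.range u)) := by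
  classical
  have hq : 0 < p ^ e := pow_pos (Fact.out (p := p.Prime)).pos e
  open BPHelper in
  constructor
  · -- membership
    show v ∈ bracketPower (p ^ e) _
    rw [hv]
    apply Submodule.sum_mem
    intro a _
    have heq : (fun j => (u a j) ^ (p ^ e)
          * ∏ i, (X i : MvPolynomial (Fin n) (ZMod p)) ^ ((a i : ℕ)))
        = (∏ i, (X i : MvPolynomial (Fin n) (ZMod p)) ^ ((a i : ℕ)))
          • (fun j => (u a j) ^ (p ^ e)) := by
      funext j
      simp [mul_comm]
    rw [heq]
    apply Submodule.smul_mem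
    apply Submodule.subset_span
    exact ⟨u a, Submodule.subset_span ⟨a, rfl⟩, rfl⟩
  · -- lower bound
    intro W hW
    have hu : ∀ a : Fin n → Fin (p ^ e),
        u a = fun j => BPHelper.phi (p ^ e) hq (BPHelper.aF e a) (v j) := by
      intro a
      funext j
      rw [hv]
      simp only [Finset.sum_apply]
      rw [BPHelper.phi_sum]
      rw [Finset.sum_eq_single a]
      · rw [BPHelper.prodXpow e a, BPHelper.phi_pow_mul e hq _ (BPHelper.aF_lt e a),
          BPHelper.phi_monomial_aF, if_pos rfl]
        simp
      · intro b _ hne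
        rw [BPHelper.prodXpow e b, BPHelper.phi_pow_mul e hq _ (BPHelper.aF_lt e a),
          BPHelper.phi_monomial_aF, if_neg hne, mul_zero]
      · intro h
        exact absurd (Finset.mem_univ a) h
    have claim : ∀ w, w ∈ bracketPower (p ^ e) W → ∀ b : Fin n → Fin (p ^ e),
        (fun j => BPHelper.phi (p ^ e) hq (BPHelper.aF e b) (w j)) ∈ W := by
      intro w hw
      unfold bracketPower at hw
      induction hw using Submodule.span_induction with
      | mem x hx =>
        obtain ⟨w', hw', rfl⟩ := hx
        intro b
        have hterm : ∀ j, BPHelper.phi (p ^ e) hq (BPHelper.aF e b) ((w' j) ^ (p ^ e))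
            = w' j * BPHelper.phi (p ^ e) hq (BPHelper.aF e b) 1 := by
          intro j
          rw [← mul_one ((w' j) ^ (p ^ e)), BPHelper.phi_pow_mul e hq _ (BPHelper.aF_lt e b)]
        by_cases hb : b = fun _ : Fin n => (⟨0, hq⟩ : Fin (p ^ e))
        · have : (fun j => BPHelper.phi (p ^ e) hq (BPHelper.aF e b) ((w' j) ^ (p ^ e))) = w' := by
            funext j
            rw [hterm j, BPHelper.phi_one, if_pos hb, mul_one]
          rw [this]
          exact hw'
        · have : (fun j => BPHelper.phi (p ^ e) hq (BPHelper.aF e b) ((w' j) ^ (p ^ e))) = 0 := by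
            funext j
            rw [hterm j, BPHelper.phi_one, if_neg hb, mul_zero]
            rfl
          rw [this]
          exact W.zero_mem
      | zero =>
        intro b
        have : (fun j => BPHelper.phi (p ^ e) hq (BPHelper.aF e b)
            ((0 : Fin α → MvPolynomial (Fin n) (ZMod p)) j)) = 0 := by
          funext j
          rw [show (0 : Fin α → MvPolynomial (Fin n) (ZMod p)) j = 0 from rfl,
            BPHelper.phi_zero]
        rw [this]
        exact W.zero_mem
      | add x y hx hy ihx ihy =>
        intro b
        have : (fun j => BPHelper.phi (p ^ e) hq (BPHelper.aF e b) ((x + y) j))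
            = (fun j => BPHelper.phi (p ^ e) hq (BPHelper.aF e b) (x j))
              + (fun j => BPHelper.phi (p ^ e) hq (BPHelper.aF e b) (y j)) := by
          funext j
          rw [show (x + y) j = x j + y j from rfl, BPHelper.phi_add]
          rfl
        rw [this]
        exact W.add_mem (ihx b) (ihy b)
      | smul r x hx ih =>
        intro b
        have key : (fun j => BPHelper.phi (p ^ e) hq (BPHelper.aF e b) ((r • x) j))
            = ∑ c : Fin n → Fin (p ^ e),
              (BPHelper.phi (p ^ e) hq (BPHelper.aF e b) (r * monomial (BPHelper.aF e c) 1))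
                • (fun j => BPHelper.phi (p ^ e) hq (BPHelper.aF e c) (x j)) := by
          funext j
          rw [Finset.sum_apply]
          simp only [Pi.smul_apply, smul_eq_mul]
          conv_lhs => rw [← BPHelper.reconstruction e hq (x j)]
          rw [Finset.mul_sum, BPHelper.phi_sum]
          apply Finset.sum_congr rfl
          intro c _
          rw [show r * (BPHelper.phi (p ^ e) hq (BPHelper.aF e c) (x j) ^ (p ^ e)
                * monomial (BPHelper.aF e c) 1)
              = BPHelper.phi (p ^ e) hq (BPHelper.aF e c) (x j) ^ (p ^ e)
                * (r * monomial (BPHelper.aF e c) 1) by ring,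
            BPHelper.phi_pow_mul e hq _ (BPHelper.aF_lt e b), mul_comm]
        rw [key]
        exact Submodule.sum_mem _ (fun c _ => Submodule.smul_mem _ _ (ih c))
    rw [Submodule.span_le]
    rintro _ ⟨a, rfl⟩
    show u a ∈ W
    rw [hu a]
    exact claim v hW a
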